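/- Let f : Ω → ℂ be nonvanishing C¹. The four functions F₀ = f, F₁ = i₁/f, F₂ = i₂/f, F₃ = i₃/f are solutions of the main quaternionic Vekua equation (D - (Df/f)C_H)W = 0, and a function W = Σⱼ₌₀³ φⱼFⱼ with scalar C¹ coefficients φⱼ solves the Vekua equation if and only if Σⱼ₌₀³ (Dφⱼ)Fⱼ = 0. -/

import Mathlib

set_option maxHeartbeats 1000000


noncomputable section

/-- ℝ³ -/
abbrev V3 := Fin 3 → ℝ
/-- Complex quaternions ℍ(ℂ) -/
abbrev HC := Quaternion ℂ

/-- partial derivative ∂ₖ of a function on ℝ³ -/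
noncomputable def pd {E : Type*} [NormedAddCommGroup E] [NormedSpace ℝ E]
    (k : Fin 3) (g : V3 → E) (x : V3) : E :=
  fderiv ℝ g x (Pi.single k 1)

noncomputable def grad {E : Type*} [NormedAddCommGroup E] [NormedSpace ℝ E]
    (g : V3 → E) (x : V3) : Fin 3 → E := fun k => pd k g x

noncomputable def dvg {E : Type*} [NormedAddCommGroup E] [NormedSpace ℝ E]
    (F : V3 → Fin 3 → E) (x : V3) : E :=
  pd 0 (fun y => F y 0) x + pd 1 (fun y => F y 1) x + pd 2 (fun y => F y 2) x

noncomputable def rot {E : Type*} [NormedAddCommGroup E] [NormedSpace ℝ E]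
    (F : V3 → Fin 3 → E) (x : V3) : Fin 3 → E :=
  ![pd 1 (fun y => F y 2) x - pd 2 (fun y => F y 1) x,
    pd 2 (fun y => F y 0) x - pd 0 (fun y => F y 2) x,
    pd 0 (fun y => F y 1) x - pd 1 (fun y => F y 0) x]

/-- scalar Laplacian -/
noncomputable def lapS {E : Type*} [NormedAddCommGroup E] [NormedSpace ℝ E]
    (g : V3 → E) (x : V3) : E :=
  pd 0 (pd 0 g) x + pd 1 (pd 1 g) x + pd 2 (pd 2 g) x

/-- purely vectorial quaternion from a ℂ³ vector -/
def vecq (v : Fin 3 → ℂ) : HC := ⟨0, v 0, v 1, v 2⟩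
/-- scalar quaternion -/
def scq (a : ℂ) : HC := ⟨a, 0, 0, 0⟩

def e1 : HC := ⟨0,1,0,0⟩
def e2 : HC := ⟨0,0,1,0⟩
def e3 : HC := ⟨0,0,0,1⟩

/-- vector part of a quaternion, as a ℂ³ vector -/
def vecPart (a : HC) : Fin 3 → ℂ := ![a.imI, a.imJ, a.imK]

/-- quaternionic conjugation C_H -/
def qconj (a : HC) : HC := ⟨a.re, -a.imI, -a.imJ, -a.imK⟩

/-- componentwise partial derivative of an ℍ(ℂ)-valued function -/
noncomputable def qpd (k : Fin 3) (F : V3 → HC) (x : V3) : HC :=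
  ⟨pd k (fun y => (F y).re) x, pd k (fun y => (F y).imI) x,
   pd k (fun y => (F y).imJ) x, pd k (fun y => (F y).imK) x⟩

/-- The Moisil–Teodorescu (Dirac) operator D = Σₖ iₖ∂ₖ -/
noncomputable def Dq (F : V3 → HC) (x : V3) : HC :=
  e1 * qpd 0 F x + e2 * qpd 1 F x + e3 * qpd 2 F x

/-- componentwise Laplacian of an ℍ(ℂ)-valued function -/
noncomputable def qlap (F : V3 → HC) (x : V3) : HC :=
  qpd 0 (qpd 0 F) x + qpd 1 (qpd 1 F) x + qpd 2 (qpd 2 F) x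

/-- ContDiffOn for ℍ(ℂ)-valued functions, componentwise -/
def QContDiffOn (n : ℕ∞) (F : V3 → HC) (s : Set V3) : Prop :=
  ContDiffOn ℝ n (fun x => (F x).re) s ∧ ContDiffOn ℝ n (fun x => (F x).imI) s ∧
  ContDiffOn ℝ n (fun x => (F x).imJ) s ∧ ContDiffOn ℝ n (fun x => (F x).imK) s

/-- euclidean norm on ℝ³ -/
noncomputable def nrm (x : V3) : ℝ := Real.sqrt (x 0 ^ 2 + x 1 ^ 2 + x 2 ^ 2)

/-- fundamental solution of the Helmholtz operator -/
noncomputable def theta (α : ℂ) (x : V3) : ℂ :=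
  -Complex.exp (Complex.I * α * (nrm x : ℂ)) / (4 * Real.pi * (nrm x : ℂ))

/-- x as a purely vectorial quaternion -/
def xq (x : V3) : HC := vecq fun k => ((x k : ℝ) : ℂ)


/-- The generating quartet F₀ = f, Fₖ = iₖ/f. -/
noncomputable def Ffun (f : V3 → ℂ) : Fin 4 → V3 → HC :=
  ![fun y => scq (f y), fun y => e1 * scq (f y)⁻¹,
    fun y => e2 * scq (f y)⁻¹, fun y => e3 * scq (f y)⁻¹]

/-! ### Auxiliary lemmas -/

@[simp] lemma mk_re' (a b c d : ℂ) : (⟨a,b,c,d⟩ : HC).re = a := rfl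
@[simp] lemma mk_imI' (a b c d : ℂ) : (⟨a,b,c,d⟩ : HC).imI = b := rfl
@[simp] lemma mk_imJ' (a b c d : ℂ) : (⟨a,b,c,d⟩ : HC).imJ = c := rfl
@[simp] lemma mk_imK' (a b c d : ℂ) : (⟨a,b,c,d⟩ : HC).imK = d := rfl

/-! literal forms of the quaternion product and sum rules -/
@[simp] lemma hcL_re_mul (a b c d : ℂ) (q : HC) :
    (@HMul.hMul HC HC HC _ (⟨a,b,c,d⟩ : HC) q).re = a*q.re - b*q.imI - c*q.imJ - d*q.imK := Quaternion.re_mul _ _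
@[simp] lemma hcL_imI_mul (a b c d : ℂ) (q : HC) :
    (@HMul.hMul HC HC HC _ (⟨a,b,c,d⟩ : HC) q).imI = a*q.imI + b*q.re + c*q.imK - d*q.imJ := Quaternion.imI_mul _ _
@[simp] lemma hcL_imJ_mul (a b c d : ℂ) (q : HC) :
    (@HMul.hMul HC HC HC _ (⟨a,b,c,d⟩ : HC) q).imJ = a*q.imJ - b*q.imK + c*q.re + d*q.imI := Quaternion.imJ_mul _ _
@[simp] lemma hcL_imK_mul (a b c d : ℂ) (q : HC) :
    (@HMul.hMul HC HC HC _ (⟨a,b,c,d⟩ : HC) q).imK = a*q.imK + b*q.imJ - c*q.imI + d*q.re := Quaternion.imK_mul _ _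
@[simp] lemma hcR_re_mul (e g h l : ℂ) (q : HC) :
    (@HMul.hMul HC HC HC _ q (⟨e,g,h,l⟩ : HC)).re = q.re*e - q.imI*g - q.imJ*h - q.imK*l := Quaternion.re_mul _ _
@[simp] lemma hcR_imI_mul (e g h l : ℂ) (q : HC) :
    (@HMul.hMul HC HC HC _ q (⟨e,g,h,l⟩ : HC)).imI = q.re*g + q.imI*e + q.imJ*l - q.imK*h := Quaternion.imI_mul _ _
@[simp] lemma hcR_imJ_mul (e g h l : ℂ) (q : HC) :
    (@HMul.hMul HC HC HC _ q (⟨e,g,h,l⟩ : HC)).imJ = q.re*h - q.imI*l + q.imJ*e + q.imK*g := Quaternion.imJ_mul _ _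
@[simp] lemma hcR_imK_mul (e g h l : ℂ) (q : HC) :
    (@HMul.hMul HC HC HC _ q (⟨e,g,h,l⟩ : HC)).imK = q.re*l + q.imI*h - q.imJ*g + q.imK*e := Quaternion.imK_mul _ _
@[simp] lemma hcB_re_mul (a b c d e g h l : ℂ) :
    (@HMul.hMul HC HC HC _ (⟨a,b,c,d⟩ : HC) (⟨e,g,h,l⟩ : HC)).re = a*e - b*g - c*h - d*l := Quaternion.re_mul _ _
@[simp] lemma hcB_imI_mul (a b c d e g h l : ℂ) :
    (@HMul.hMul HC HC HC _ (⟨a,b,c,d⟩ : HC) (⟨e,g,h,l⟩ : HC)).imI = a*g + b*e + c*l - d*h := Quaternion.imI_mul _ _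
@[simp] lemma hcB_imJ_mul (a b c d e g h l : ℂ) :
    (@HMul.hMul HC HC HC _ (⟨a,b,c,d⟩ : HC) (⟨e,g,h,l⟩ : HC)).imJ = a*h - b*l + c*e + d*g := Quaternion.imJ_mul _ _
@[simp] lemma hcB_imK_mul (a b c d e g h l : ℂ) :
    (@HMul.hMul HC HC HC _ (⟨a,b,c,d⟩ : HC) (⟨e,g,h,l⟩ : HC)).imK = a*l + b*h - c*g + d*e := Quaternion.imK_mul _ _
@[simp] lemma hcL_re_add (a b c d : ℂ) (q : HC) :
    (@HAdd.hAdd HC HC HC _ (⟨a,b,c,d⟩ : HC) q).re = a + q.re := Quaternion.re_add _ _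
@[simp] lemma hcL_imI_add (a b c d : ℂ) (q : HC) :
    (@HAdd.hAdd HC HC HC _ (⟨a,b,c,d⟩ : HC) q).imI = b + q.imI := Quaternion.imI_add _ _
@[simp] lemma hcL_imJ_add (a b c d : ℂ) (q : HC) :
    (@HAdd.hAdd HC HC HC _ (⟨a,b,c,d⟩ : HC) q).imJ = c + q.imJ := Quaternion.imJ_add _ _
@[simp] lemma hcL_imK_add (a b c d : ℂ) (q : HC) :
    (@HAdd.hAdd HC HC HC _ (⟨a,b,c,d⟩ : HC) q).imK = d + q.imK := Quaternion.imK_add _ _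
@[simp] lemma hcR_re_add (e g h l : ℂ) (q : HC) :
    (@HAdd.hAdd HC HC HC _ q (⟨e,g,h,l⟩ : HC)).re = q.re + e := Quaternion.re_add _ _
@[simp] lemma hcR_imI_add (e g h l : ℂ) (q : HC) :
    (@HAdd.hAdd HC HC HC _ q (⟨e,g,h,l⟩ : HC)).imI = q.imI + g := Quaternion.imI_add _ _
@[simp] lemma hcR_imJ_add (e g h l : ℂ) (q : HC) :
    (@HAdd.hAdd HC HC HC _ q (⟨e,g,h,l⟩ : HC)).imJ = q.imJ + h := Quaternion.imJ_add _ _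
@[simp] lemma hcR_imK_add (e g h l : ℂ) (q : HC) :
    (@HAdd.hAdd HC HC HC _ q (⟨e,g,h,l⟩ : HC)).imK = q.imK + l := Quaternion.imK_add _ _
@[simp] lemma hcB_re_add (a b c d e g h l : ℂ) :
    (@HAdd.hAdd HC HC HC _ (⟨a,b,c,d⟩ : HC) (⟨e,g,h,l⟩ : HC)).re = a + e := Quaternion.re_add _ _
@[simp] lemma hcB_imI_add (a b c d e g h l : ℂ) :
    (@HAdd.hAdd HC HC HC _ (⟨a,b,c,d⟩ : HC) (⟨e,g,h,l⟩ : HC)).imI = b + g := Quaternion.imI_add _ _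
@[simp] lemma hcB_imJ_add (a b c d e g h l : ℂ) :
    (@HAdd.hAdd HC HC HC _ (⟨a,b,c,d⟩ : HC) (⟨e,g,h,l⟩ : HC)).imJ = c + h := Quaternion.imJ_add _ _
@[simp] lemma hcB_imK_add (a b c d e g h l : ℂ) :
    (@HAdd.hAdd HC HC HC _ (⟨a,b,c,d⟩ : HC) (⟨e,g,h,l⟩ : HC)).imK = d + l := Quaternion.imK_add _ _

lemma pd_constC (k : Fin 3) (c : ℂ) (x : V3) : pd k (fun _ => c) x = 0 := by
  simp [pd]

lemma pd_mul {φ g : V3 → ℂ} {x : V3} (hφ : DifferentiableAt ℝ φ x)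
    (hg : DifferentiableAt ℝ g x) (k : Fin 3) :
    pd k (fun y => φ y * g y) x = pd k φ x * g x + φ x * pd k g x := by
  simp only [pd, fderiv_fun_mul hφ hg, ContinuousLinearMap.add_apply,
    ContinuousLinearMap.smul_apply, smul_eq_mul]
  ring

lemma pd_add {φ g : V3 → ℂ} {x : V3} (hφ : DifferentiableAt ℝ φ x)
    (hg : DifferentiableAt ℝ g x) (k : Fin 3) :
    pd k (fun y => φ y + g y) x = pd k φ x + pd k g x := by
  simp only [pd, fderiv_fun_add hφ hg, ContinuousLinearMap.add_apply]

lemma pd_inv {f : V3 → ℂ} {x : V3} (hf : DifferentiableAt ℝ f x) (h0 : f x ≠ 0) (k : Fin 3) :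
    pd k (fun y => (f y)⁻¹) x = -(pd k f x / (f x)^2) := by
  have h := ((hasFDerivAt_inv' (𝕜 := ℝ) (R := ℂ) h0).comp x hf.hasFDerivAt).fderiv
  have h2 : pd k (fun y => (f y)⁻¹) x
      = (-ContinuousLinearMap.mulLeftRight ℝ ℂ (f x)⁻¹ (f x)⁻¹) (fderiv ℝ f x (Pi.single k 1)) := by
    rw [pd, show (fun y => (f y)⁻¹) = Inv.inv ∘ f from rfl, h]
    simp
  rw [h2]
  simp only [ContinuousLinearMap.neg_apply, ContinuousLinearMap.mulLeftRight_apply, pd]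
  rw [div_eq_mul_inv, sq, mul_inv]
  ring

lemma qpd_mk (a b c d : V3 → ℂ) (k : Fin 3) (x : V3) :
    qpd k (fun y => (⟨a y, b y, c y, d y⟩ : HC)) x
      = ⟨pd k a x, pd k b x, pd k c x, pd k d x⟩ := rfl

lemma scq_mul (a : ℂ) (q : HC) : scq a * q = ⟨a*q.re, a*q.imI, a*q.imJ, a*q.imK⟩ := by
  ext <;> simp [scq, Quaternion.re_mul, Quaternion.imI_mul, Quaternion.imJ_mul,
    Quaternion.imK_mul] <;> ring

lemma scq_comm (a : ℂ) (q : HC) : scq a * q = q * scq a := by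
  ext <;> simp [scq, Quaternion.re_mul, Quaternion.imI_mul, Quaternion.imJ_mul,
    Quaternion.imK_mul] <;> ring

/-- differentiability of all four components at a point -/
def QD (F : V3 → HC) (x : V3) : Prop :=
  DifferentiableAt ℝ (fun y => (F y).re) x ∧ DifferentiableAt ℝ (fun y => (F y).imI) x ∧
  DifferentiableAt ℝ (fun y => (F y).imJ) x ∧ DifferentiableAt ℝ (fun y => (F y).imK) x

lemma qpd_add {F G : V3 → HC} {x : V3} (hF : QD F x) (hG : QD G x) (k : Fin 3) :
    qpd k (fun y => F y + G y) x = qpd k F x + qpd k G x := by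
  obtain ⟨h1,h2,h3,h4⟩ := hF; obtain ⟨g1,g2,g3,g4⟩ := hG
  ext
  · show pd k (fun y => (F y + G y).re) x = _
    simp only [Quaternion.re_add]; rw [pd_add h1 g1]; rfl
  · show pd k (fun y => (F y + G y).imI) x = _
    simp only [Quaternion.imI_add]; rw [pd_add h2 g2]; rfl
  · show pd k (fun y => (F y + G y).imJ) x = _
    simp only [Quaternion.imJ_add]; rw [pd_add h3 g3]; rfl
  · show pd k (fun y => (F y + G y).imK) x = _
    simp only [Quaternion.imK_add]; rw [pd_add h4 g4]; rfl

lemma QD_add {F G : V3 → HC} {x : V3} (hF : QD F x) (hG : QD G x) :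
    QD (fun y => F y + G y) x := by
  obtain ⟨h1,h2,h3,h4⟩ := hF; obtain ⟨g1,g2,g3,g4⟩ := hG
  refine ⟨?_, ?_, ?_, ?_⟩ <;> simp only [Quaternion.re_add, Quaternion.imI_add,
    Quaternion.imJ_add, Quaternion.imK_add]
  exacts [h1.add g1, h2.add g2, h3.add g3, h4.add g4]

lemma QD_smul {φ : V3 → ℂ} {F : V3 → HC} {x : V3} (hφ : DifferentiableAt ℝ φ x)
    (hF : QD F x) : QD (fun y => scq (φ y) * F y) x := by
  obtain ⟨h1,h2,h3,h4⟩ := hF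
  refine ⟨?_, ?_, ?_, ?_⟩ <;> simp only [scq_mul, mk_re', mk_imI', mk_imJ', mk_imK']
  exacts [hφ.mul h1, hφ.mul h2, hφ.mul h3, hφ.mul h4]

lemma qpd_smul {φ : V3 → ℂ} {F : V3 → HC} {x : V3} (hφ : DifferentiableAt ℝ φ x)
    (hF : QD F x) (k : Fin 3) :
    qpd k (fun y => scq (φ y) * F y) x = scq (pd k φ x) * F x + scq (φ x) * qpd k F x := by
  obtain ⟨h1,h2,h3,h4⟩ := hF
  ext
  · show pd k (fun y => (scq (φ y) * F y).re) x = _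
    simp only [scq_mul, mk_re']
    rw [pd_mul hφ h1]
    simp [Quaternion.re_add, scq_mul, qpd]
  · show pd k (fun y => (scq (φ y) * F y).imI) x = _
    simp only [scq_mul, mk_imI']
    rw [pd_mul hφ h2]
    simp [Quaternion.imI_add, scq_mul, qpd]
  · show pd k (fun y => (scq (φ y) * F y).imJ) x = _
    simp only [scq_mul, mk_imJ']
    rw [pd_mul hφ h3]
    simp [Quaternion.imJ_add, scq_mul, qpd]
  · show pd k (fun y => (scq (φ y) * F y).imK) x = _
    simp only [scq_mul, mk_imK']
    rw [pd_mul hφ h4]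
    simp [Quaternion.imK_add, scq_mul, qpd]

lemma Dq_add {F G : V3 → HC} {x : V3} (hF : QD F x) (hG : QD G x) :
    Dq (fun y => F y + G y) x = Dq F x + Dq G x := by
  simp only [Dq, qpd_add hF hG, mul_add]
  abel

lemma Dq_smul {φ : V3 → ℂ} {F : V3 → HC} {x : V3} (hφ : DifferentiableAt ℝ φ x)
    (hF : QD F x) :
    Dq (fun y => scq (φ y) * F y) x
      = vecq (grad φ x) * F x + scq (φ x) * Dq F x := by
  simp only [Dq, qpd_smul hφ hF]
  ext <;>
    simp [vecq, scq, grad, e1, e2, e3, Quaternion.re_mul, Quaternion.imI_mul,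
      Quaternion.imJ_mul, Quaternion.imK_mul, Quaternion.re_add, Quaternion.imI_add,
      Quaternion.imJ_add, Quaternion.imK_add] <;> ring

lemma qconj_add (a b : HC) : qconj (a + b) = qconj a + qconj b := by
  ext <;> simp [qconj] <;> ring

lemma qconj_smul (a : ℂ) (q : HC) : qconj (scq a * q) = scq a * qconj q := by
  ext <;> simp [qconj, scq_mul, scq] <;> ring

lemma Ffun_zero (f : V3 → ℂ) : Ffun f 0 = fun y => (⟨f y, 0, 0, 0⟩ : HC) := by
  funext y
  show scq (f y) = _
  rfl

lemma Ffun_one (f : V3 → ℂ) : Ffun f 1 = fun y => (⟨0, (f y)⁻¹, 0, 0⟩ : HC) := by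
  funext y
  show e1 * scq (f y)⁻¹ = _
  ext <;> simp [e1, scq, Quaternion.re_mul, Quaternion.imI_mul, Quaternion.imJ_mul,
    Quaternion.imK_mul]

lemma Ffun_two (f : V3 → ℂ) : Ffun f 2 = fun y => (⟨0, 0, (f y)⁻¹, 0⟩ : HC) := by
  funext y
  show e2 * scq (f y)⁻¹ = _
  ext <;> simp [e2, scq, Quaternion.re_mul, Quaternion.imI_mul, Quaternion.imJ_mul,
    Quaternion.imK_mul]

lemma Ffun_three (f : V3 → ℂ) : Ffun f 3 = fun y => (⟨0, 0, 0, (f y)⁻¹⟩ : HC) := by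
  funext y
  show e3 * scq (f y)⁻¹ = _
  ext <;> simp [e3, scq, Quaternion.re_mul, Quaternion.imI_mul, Quaternion.imJ_mul,
    Quaternion.imK_mul]

lemma QD_Ffun {f : V3 → ℂ} {x : V3} (hdx : DifferentiableAt ℝ f x) (hfx : f x ≠ 0)
    (j : Fin 4) : QD (Ffun f j) x := by
  have hinv : DifferentiableAt ℝ (fun y => (f y)⁻¹) x := hdx.inv hfx
  have h0 : QD (Ffun f 0) x := by
    rw [Ffun_zero]; exact ⟨hdx, differentiableAt_const 0, differentiableAt_const 0,
      differentiableAt_const 0⟩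
  have h1 : QD (Ffun f 1) x := by
    rw [Ffun_one]; exact ⟨differentiableAt_const 0, hinv, differentiableAt_const 0,
      differentiableAt_const 0⟩
  have h2 : QD (Ffun f 2) x := by
    rw [Ffun_two]; exact ⟨differentiableAt_const 0, differentiableAt_const 0, hinv,
      differentiableAt_const 0⟩
  have h3 : QD (Ffun f 3) x := by
    rw [Ffun_three]; exact ⟨differentiableAt_const 0, differentiableAt_const 0,
      differentiableAt_const 0, hinv⟩
  fin_cases j
  exacts [h0, h1, h2, h3]

/-- F₀,…,F₃ solve the main Vekua equation, and W = Σφⱼ Fⱼ solves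
it iff Σ(Dφⱼ)Fⱼ = 0. -/
theorem stmt16 (Ω : Set V3) (hΩ : IsOpen Ω) (f : V3 → ℂ)
    (hf : ContDiffOn ℝ 1 f Ω) (hf0 : ∀ x ∈ Ω, f x ≠ 0) :
    (∀ j : Fin 4, ∀ x ∈ Ω,
      Dq (Ffun f j) x = vecq (fun k => grad f x k / f x) * qconj (Ffun f j x)) ∧
    (∀ φ : Fin 4 → V3 → ℂ, (∀ j, ContDiffOn ℝ 1 (φ j) Ω) →
      ((∀ x ∈ Ω,
          Dq (fun y => ∑ j : Fin 4, scq (φ j y) * Ffun f j y) x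
            = vecq (fun k => grad f x k / f x)
                * qconj (∑ j : Fin 4, scq (φ j x) * Ffun f j x)) ↔
       (∀ x ∈ Ω, ∑ j : Fin 4, vecq (grad (φ j) x) * Ffun f j x = 0))) := by
  have part1 : ∀ j : Fin 4, ∀ x ∈ Ω,
      Dq (Ffun f j) x = vecq (fun k => grad f x k / f x) * qconj (Ffun f j x) := by
    intro j x hx
    have hdx : DifferentiableAt ℝ f x :=
      (hf.differentiableOn one_ne_zero x hx).differentiableAt (hΩ.mem_nhds hx)
    have hfx : f x ≠ 0 := hf0 x hx
    have h0 : Dq (Ffun f 0) x = vecq (fun k => grad f x k / f x) * qconj (Ffun f 0 x) := by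
      rw [Ffun_zero]
      simp only [Dq, qpd_mk]
      ext <;>
        simp [vecq, qconj, grad, e1, e2, e3, pd_constC, Quaternion.re_mul,
          Quaternion.imI_mul, Quaternion.imJ_mul, Quaternion.imK_mul, Quaternion.re_add,
          Quaternion.imI_add, Quaternion.imJ_add, Quaternion.imK_add] <;>
        exact (div_mul_cancel₀ _ hfx).symm
    have h1 : Dq (Ffun f 1) x = vecq (fun k => grad f x k / f x) * qconj (Ffun f 1 x) := by
      rw [Ffun_one]
      simp only [Dq, qpd_mk, pd_inv hdx hfx, pd_constC]
      ext <;>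
        simp [vecq, qconj, grad, e1, e2, e3, pd_constC, Quaternion.re_mul,
          Quaternion.imI_mul, Quaternion.imJ_mul, Quaternion.imK_mul, Quaternion.re_add,
          Quaternion.imI_add, Quaternion.imJ_add, Quaternion.imK_add] <;>
        (try simp only [sq, div_eq_mul_inv, mul_inv]) <;> ring
    have h2 : Dq (Ffun f 2) x = vecq (fun k => grad f x k / f x) * qconj (Ffun f 2 x) := by
      rw [Ffun_two]
      simp only [Dq, qpd_mk, pd_inv hdx hfx, pd_constC]
      ext <;>
        simp [vecq, qconj, grad, e1, e2, e3, pd_constC, Quaternion.re_mul,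
          Quaternion.imI_mul, Quaternion.imJ_mul, Quaternion.imK_mul, Quaternion.re_add,
          Quaternion.imI_add, Quaternion.imJ_add, Quaternion.imK_add] <;>
        (try simp only [sq, div_eq_mul_inv, mul_inv]) <;> ring
    have h3 : Dq (Ffun f 3) x = vecq (fun k => grad f x k / f x) * qconj (Ffun f 3 x) := by
      rw [Ffun_three]
      simp only [Dq, qpd_mk, pd_inv hdx hfx, pd_constC]
      ext <;>
        simp [vecq, qconj, grad, e1, e2, e3, pd_constC, Quaternion.re_mul,
          Quaternion.imI_mul, Quaternion.imJ_mul, Quaternion.imK_mul, Quaternion.re_add,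
          Quaternion.imI_add, Quaternion.imJ_add, Quaternion.imK_add] <;>
        (try simp only [sq, div_eq_mul_inv, mul_inv]) <;> ring
    fin_cases j
    exacts [h0, h1, h2, h3]
  refine ⟨part1, ?_⟩
  intro φ hφ
  have key : ∀ x ∈ Ω,
      Dq (fun y => ∑ j : Fin 4, scq (φ j y) * Ffun f j y) x
        = (∑ j : Fin 4, vecq (grad (φ j) x) * Ffun f j x)
          + vecq (fun k => grad f x k / f x)
              * qconj (∑ j : Fin 4, scq (φ j x) * Ffun f j x) := by
    intro x hx
    have hdx : DifferentiableAt ℝ f x :=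
      (hf.differentiableOn one_ne_zero x hx).differentiableAt (hΩ.mem_nhds hx)
    have hfx : f x ≠ 0 := hf0 x hx
    have hdφ : ∀ j, DifferentiableAt ℝ (φ j) x := fun j =>
      ((hφ j).differentiableOn one_ne_zero x hx).differentiableAt (hΩ.mem_nhds hx)
    have hQ : ∀ j : Fin 4, QD (fun y => scq (φ j y) * Ffun f j y) x := fun j =>
      QD_smul (hdφ j) (QD_Ffun hdx hfx j)
    have hsum : (fun y => ∑ j : Fin 4, scq (φ j y) * Ffun f j y)
        = fun y => scq (φ 0 y) * Ffun f 0 y + scq (φ 1 y) * Ffun f 1 y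
            + scq (φ 2 y) * Ffun f 2 y + scq (φ 3 y) * Ffun f 3 y := by
      funext y; exact Fin.sum_univ_four _
    rw [hsum, Dq_add (QD_add (QD_add (hQ 0) (hQ 1)) (hQ 2)) (hQ 3),
        Dq_add (QD_add (hQ 0) (hQ 1)) (hQ 2), Dq_add (hQ 0) (hQ 1),
        Dq_smul (hdφ 0) (QD_Ffun hdx hfx 0), Dq_smul (hdφ 1) (QD_Ffun hdx hfx 1),
        Dq_smul (hdφ 2) (QD_Ffun hdx hfx 2), Dq_smul (hdφ 3) (QD_Ffun hdx hfx 3),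
        part1 0 x hx, part1 1 x hx, part1 2 x hx, part1 3 x hx,
        Fin.sum_univ_four, Fin.sum_univ_four]
    have hc : ∀ (a : ℂ) (p q : HC), p * (scq a * q) = scq a * (p * q) := by
      intro a p q; rw [← mul_assoc, ← scq_comm, mul_assoc]
    simp only [qconj_add, qconj_smul, mul_add, hc]
    abel
  constructor
  · intro h x hx
    have k1 := key x hx
    rw [h x hx] at k1
    have h0 : (∑ j : Fin 4, vecq (grad (φ j) x) * Ffun f j x)
          + vecq (fun k => grad f x k / f x)
              * qconj (∑ j : Fin 4, scq (φ j x) * Ffun f j x)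
        = 0 + vecq (fun k => grad f x k / f x)
              * qconj (∑ j : Fin 4, scq (φ j x) * Ffun f j x) := by
      rw [zero_add]; exact k1.symm
    exact add_right_cancel h0
  · intro h x hx
    rw [key x hx, h x hx, zero_add]
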